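/- Let ‖·‖ be a norm on ℝ², let v ∈ ℝ² \ ℚ², and let (q_n, p_n)_{n≥0} ⊆ ℕ × ℤ² be a sequence such that: q₀ = 1; q_n < q_{n+1} for all n; ‖q_n v − p_n‖ < ‖q_{n−1} v − p_{n−1}‖ for all n ≥ 1; and int Π_n(v) ∩ ℤ³ = ∅ for all n ≥ 1, where Π_n(v) := {(α, y) ∈ ℝ × ℝ² : 0 ≤ α ≤ q_n and ‖α v − y‖ ≤ ‖q_{n−1} v − p_{n−1}‖} and int denotes the interior in ℝ³. Then (q_n, p_n)_{n≥0} is the best approximation sequence of v with respect to ‖·‖. -/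

import Mathlib

open Real Filter

noncomputable section

open Real Filter

noncomputable section

/-- `N` is a norm on `ℝ × ℝ`. -/
def IsNorm2 (N : ℝ × ℝ → ℝ) : Prop :=
  (∀ u, 0 ≤ N u) ∧ (∀ u, N u = 0 ↔ u = 0) ∧
  (∀ (r : ℝ) (u : ℝ × ℝ), N (r • u) = |r| * N u) ∧
  (∀ u w : ℝ × ℝ, N (u + w) ≤ N u + N w)

/-- distance (w.r.t. `N`) from a point of `ℝ²` to the integer lattice `ℤ²`. -/
def latDist (N : ℝ × ℝ → ℝ) (w : ℝ × ℝ) : ℝ :=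
  sInf {r : ℝ | ∃ p : ℤ × ℤ, r = N (w - ((p.1 : ℝ), (p.2 : ℝ)))}

/-- `w` is the best approximation sequence of `v` with respect to `N`. -/
def IsBestApproxSeq (N : ℝ × ℝ → ℝ) (v : ℝ × ℝ) (w : ℕ → ℕ × (ℤ × ℤ)) : Prop :=
  (w 0).1 = 1 ∧
  (∀ n : ℕ, 1 ≤ n →
    IsLeast {q : ℕ | 1 ≤ q ∧
      latDist N ((q : ℝ) • v) < latDist N (((w (n - 1)).1 : ℝ) • v)} (w n).1) ∧
  (∀ n : ℕ,
    N (((w n).1 : ℝ) • v - (((w n).2.1 : ℝ), ((w n).2.2 : ℝ))) =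
      latDist N (((w n).1 : ℝ) • v))

/-- the `n`-th long displacement vector `β_n(v) = √(q_{n+1}) (q_n v - p_n)`. -/
def betaVec (w : ℕ → ℕ × (ℤ × ℤ)) (v : ℝ × ℝ) (n : ℕ) : ℝ × ℝ :=
  Real.sqrt ((w (n + 1)).1) •
    (((w n).1 : ℝ) • v - (((w n).2.1 : ℝ), ((w n).2.2 : ℝ)))

/-- `v ∈ ℝ² \ ℚ²`. -/
def NotRat2 (v : ℝ × ℝ) : Prop := ¬ ∃ p : ℚ × ℚ, v = ((p.1 : ℝ), (p.2 : ℝ))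

variable {N : ℝ × ℝ → ℝ}

lemma norm2_neg (hN : IsNorm2 N) (u : ℝ × ℝ) : N (-u) = N u := by
  have := hN.2.2.1 (-1) u
  simpa using this

lemma norm2_upper (hN : IsNorm2 N) : ∃ C : ℝ, 0 < C ∧ ∀ u, N u ≤ C * ‖u‖ := by
  have h10 := hN.1 (1, 0)
  have h01 := hN.1 (0, 1)
  refine ⟨N (1, 0) + N (0, 1) + 1, by linarith, fun u => ?_⟩
  have hu : u = u.1 • ((1 : ℝ), (0 : ℝ)) + u.2 • ((0 : ℝ), (1 : ℝ)) := by
    simp [Prod.ext_iff]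
  have h1 : N u ≤ |u.1| * N (1, 0) + |u.2| * N (0, 1) := by
    calc N u ≤ N (u.1 • ((1 : ℝ), (0 : ℝ))) + N (u.2 • ((0 : ℝ), (1 : ℝ))) := by
          nth_rewrite 1 [hu]; exact hN.2.2.2 _ _
      _ = |u.1| * N (1, 0) + |u.2| * N (0, 1) := by rw [hN.2.2.1, hN.2.2.1]
  have hn1 : |u.1| ≤ ‖u‖ := by
    simpa using norm_fst_le u
  have hn2 : |u.2| ≤ ‖u‖ := by
    simpa using norm_snd_le u
  have hnn : (0:ℝ) ≤ ‖u‖ := norm_nonneg u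
  nlinarith

lemma norm2_continuous (hN : IsNorm2 N) : Continuous N := by
  obtain ⟨C, hC, hCle⟩ := norm2_upper hN
  have key : ∀ a b : ℝ × ℝ, N a - N b ≤ C * ‖a - b‖ := by
    intro a b
    have := hN.2.2.2 (a - b) b
    simp only [sub_add_cancel] at this
    have := hCle (a - b)
    linarith
  rw [Metric.continuous_iff]
  intro b ε hε
  refine ⟨ε / C, by positivity, fun a ha => ?_⟩
  rw [Real.dist_eq, abs_lt]
  have h1 := key a b
  have h2 := key b a
  rw [dist_eq_norm] at ha
  have h3 : ‖b - a‖ = ‖a - b‖ := by rw [← norm_neg]; ring_nf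
  have h4 : C * ‖a - b‖ < ε := by
    calc C * ‖a - b‖ < C * (ε / C) := by exact (mul_lt_mul_iff_right₀ hC).mpr ha
      _ = ε := by field_simp
  constructor <;> nlinarith [norm_nonneg (a - b)]

lemma norm2_lower (hN : IsNorm2 N) : ∃ c : ℝ, 0 < c ∧ ∀ u, c * ‖u‖ ≤ N u := by
  have hcomp : IsCompact (Metric.sphere (0 : ℝ × ℝ) 1) := isCompact_sphere 0 1
  have hne : (Metric.sphere (0 : ℝ × ℝ) 1).Nonempty := by
    refine ⟨((1 : ℝ), (0 : ℝ)), ?_⟩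
    simp [Prod.norm_def]
  obtain ⟨u0, hu0mem, hu0min⟩ := hcomp.exists_isMinOn hne (norm2_continuous hN).continuousOn
  have hu0ne : u0 ≠ 0 := by
    intro h
    rw [Metric.mem_sphere, dist_zero_right, h] at hu0mem
    simp at hu0mem
  have hc : 0 < N u0 := by
    rcases lt_or_eq_of_le (hN.1 u0) with h | h
    · exact h
    · exact absurd ((hN.2.1 u0).mp h.symm) hu0ne
  refine ⟨N u0, hc, fun u => ?_⟩
  rcases eq_or_ne u 0 with rfl | hu
  · simp
    have := (hN.2.1 0).mpr rfl
    linarith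
  · have hnu : (0:ℝ) < ‖u‖ := norm_pos_iff.mpr hu
    have hmem : ‖u‖⁻¹ • u ∈ Metric.sphere (0 : ℝ × ℝ) 1 := by
      simp [norm_smul, abs_of_pos (inv_pos.mpr hnu), inv_mul_cancel₀ hnu.ne']
    have hmin : N u0 ≤ N (‖u‖⁻¹ • u) := hu0min hmem
    have : N (‖u‖⁻¹ • u) = ‖u‖⁻¹ * N u := by
      rw [hN.2.2.1]; rw [abs_of_pos (inv_pos.mpr hnu)]
    rw [this] at hmin
    have : N u0 * ‖u‖ ≤ ‖u‖⁻¹ * N u * ‖u‖ := by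
      exact mul_le_mul_of_nonneg_right hmin hnu.le
    calc N u0 * ‖u‖ ≤ ‖u‖⁻¹ * N u * ‖u‖ := this
      _ = N u := by field_simp

/-- The lattice distance is attained at some lattice point. -/
lemma latDist_min (hN : IsNorm2 N) (x : ℝ × ℝ) :
    ∃ p : ℤ × ℤ, latDist N x = N (x - ((p.1 : ℝ), (p.2 : ℝ))) ∧
      ∀ p' : ℤ × ℤ, N (x - ((p.1 : ℝ), (p.2 : ℝ))) ≤ N (x - ((p'.1 : ℝ), (p'.2 : ℝ))) := by
  obtain ⟨c, hc, hlow⟩ := norm2_lower hN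
  set f : ℤ × ℤ → ℝ := fun p => N (x - ((p.1 : ℝ), (p.2 : ℝ))) with hf
  set R : ℝ := ‖x‖ + N x / c with hR
  set T : Set (ℤ × ℤ) := {p | f p ≤ N x} with hT
  have hmemT : ∀ p ∈ T, |(p.1 : ℝ)| ≤ R ∧ |(p.2 : ℝ)| ≤ R := by
    intro p hp
    have h1 : c * ‖x - ((p.1 : ℝ), (p.2 : ℝ))‖ ≤ N x := le_trans (hlow _) hp
    have h2 : ‖x - ((p.1 : ℝ), (p.2 : ℝ))‖ ≤ N x / c := by
      rw [le_div_iff₀ hc]; linarith [h1, mul_comm c ‖x - ((p.1 : ℝ), (p.2 : ℝ))‖]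
    have h3 : ‖((p.1 : ℝ), (p.2 : ℝ))‖ ≤ R := by
      calc ‖((p.1 : ℝ), (p.2 : ℝ))‖ = ‖x - (x - ((p.1 : ℝ), (p.2 : ℝ)))‖ := by ring_nf
        _ ≤ ‖x‖ + ‖x - ((p.1 : ℝ), (p.2 : ℝ))‖ := norm_sub_le _ _
        _ ≤ R := by rw [hR]; linarith
    constructor
    · calc |(p.1 : ℝ)| ≤ ‖((p.1 : ℝ), (p.2 : ℝ))‖ := by simpa using norm_fst_le ((p.1 : ℝ), (p.2 : ℝ))
        _ ≤ R := h3
    · calc |(p.2 : ℝ)| ≤ ‖((p.1 : ℝ), (p.2 : ℝ))‖ := by simpa using norm_snd_le ((p.1 : ℝ), (p.2 : ℝ))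
        _ ≤ R := h3
  have hTfin : T.Finite := by
    apply Set.Finite.subset (Set.finite_Icc ((⌈-R⌉ : ℤ), (⌈-R⌉ : ℤ)) ((⌊R⌋ : ℤ), (⌊R⌋ : ℤ)))
    intro p hp
    obtain ⟨h1, h2⟩ := hmemT p hp
    rw [abs_le] at h1 h2
    constructor
    · exact ⟨Int.ceil_le.mpr h1.1, Int.ceil_le.mpr h2.1⟩
    · exact ⟨Int.le_floor.mpr h1.2, Int.le_floor.mpr h2.2⟩
  have h0T : ((0 : ℤ), (0 : ℤ)) ∈ T := by
    simp only [hT, Set.mem_setOf_eq, hf]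
    norm_num
    rw [show ((0:ℝ), (0:ℝ)) = (0 : ℝ × ℝ) from rfl, sub_zero]
  obtain ⟨p0, hp0T, hp0min⟩ := Set.exists_min_image T f hTfin ⟨_, h0T⟩
  have hglobal : ∀ p' : ℤ × ℤ, f p0 ≤ f p' := by
    intro p'
    by_cases hp' : p' ∈ T
    · exact hp0min p' hp'
    · have : N x < f p' := by
        simp only [hT, Set.mem_setOf_eq, not_le] at hp'
        exact hp'
      have := hp0min _ h0T
      have h0 : f ((0 : ℤ), (0 : ℤ)) = N x := by simp [hf]; rw [show ((0:ℝ), (0:ℝ)) = (0 : ℝ × ℝ) from rfl, sub_zero]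
      linarith
  refine ⟨p0, ?_, hglobal⟩
  have hle : IsLeast {r : ℝ | ∃ p : ℤ × ℤ, r = N (x - ((p.1 : ℝ), (p.2 : ℝ)))} (f p0) := by
    constructor
    · exact ⟨p0, rfl⟩
    · rintro r ⟨p', rfl⟩
      exact hglobal p'
  rw [latDist]
  exact hle.csInf_eq

theorem statement6
    (N : ℝ × ℝ → ℝ) (hN : IsNorm2 N)
    (v : ℝ × ℝ) (hv : NotRat2 v)
    (w : ℕ → ℕ × (ℤ × ℤ))
    (h0 : (w 0).1 = 1)
    (hmono : ∀ n : ℕ, (w n).1 < (w (n + 1)).1)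
    (hdec : ∀ n : ℕ, 1 ≤ n →
      N (((w n).1 : ℝ) • v - (((w n).2.1 : ℝ), ((w n).2.2 : ℝ))) <
        N (((w (n - 1)).1 : ℝ) • v -
          (((w (n - 1)).2.1 : ℝ), ((w (n - 1)).2.2 : ℝ))))
    (hempty : ∀ n : ℕ, 1 ≤ n →
      interior {x : ℝ × ℝ × ℝ | 0 ≤ x.1 ∧ x.1 ≤ ((w n).1 : ℝ) ∧
          N (x.1 • v - x.2) ≤
            N (((w (n - 1)).1 : ℝ) • v -
              (((w (n - 1)).2.1 : ℝ), ((w (n - 1)).2.2 : ℝ)))} ∩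
        {x : ℝ × ℝ × ℝ | ∃ z : ℤ × ℤ × ℤ,
          x = ((z.1 : ℝ), (z.2.1 : ℝ), (z.2.2 : ℝ))} = ∅) :
    IsBestApproxSeq N v w := by
  -- continuity of the map used in the cylinder sets
  have hgcont : Continuous fun x : ℝ × ℝ × ℝ => N (x.1 • v - x.2) :=
    (norm2_continuous hN).comp ((continuous_fst.smul continuous_const).sub continuous_snd)
  -- key geometric consequence of `hempty`: no integer point strictly inside Π_n
  have key : ∀ n : ℕ, 1 ≤ n → ∀ q : ℕ, ∀ p : ℤ × ℤ, 0 < q → q < (w n).1 →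
      N ((q : ℝ) • v - ((p.1 : ℝ), (p.2 : ℝ))) <
        N (((w (n - 1)).1 : ℝ) • v -
          (((w (n - 1)).2.1 : ℝ), ((w (n - 1)).2.2 : ℝ))) → False := by
    intro n hn q p hq0 hqn hlt
    set c := N (((w (n - 1)).1 : ℝ) • v -
      (((w (n - 1)).2.1 : ℝ), ((w (n - 1)).2.2 : ℝ))) with hc
    set U : Set (ℝ × ℝ × ℝ) :=
      {x | 0 < x.1 ∧ x.1 < ((w n).1 : ℝ) ∧ N (x.1 • v - x.2) < c} with hU
    have hUopen : IsOpen U := by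
      have h1 : IsOpen {x : ℝ × ℝ × ℝ | 0 < x.1} :=
        isOpen_lt continuous_const continuous_fst
      have h2 : IsOpen {x : ℝ × ℝ × ℝ | x.1 < ((w n).1 : ℝ)} :=
        isOpen_lt continuous_fst continuous_const
      have h3 : IsOpen {x : ℝ × ℝ × ℝ | N (x.1 • v - x.2) < c} :=
        isOpen_lt hgcont continuous_const
      have : U = {x : ℝ × ℝ × ℝ | 0 < x.1} ∩
          ({x : ℝ × ℝ × ℝ | x.1 < ((w n).1 : ℝ)} ∩
           {x : ℝ × ℝ × ℝ | N (x.1 • v - x.2) < c}) := by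
        ext x; simp [hU, Set.mem_inter_iff, and_assoc]
      rw [this]
      exact h1.inter (h2.inter h3)
    have hsub : U ⊆ {x : ℝ × ℝ × ℝ | 0 ≤ x.1 ∧ x.1 ≤ ((w n).1 : ℝ) ∧
        N (x.1 • v - x.2) ≤ c} := by
      rintro x ⟨h1, h2, h3⟩
      exact ⟨h1.le, h2.le, h3.le⟩
    set x0 : ℝ × ℝ × ℝ := ((q : ℝ), ((p.1 : ℝ), (p.2 : ℝ))) with hx0
    have hx0U : x0 ∈ U := by
      refine ⟨by simp [hx0]; exact_mod_cast hq0, by simp [hx0]; exact_mod_cast hqn, hlt⟩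
    have hx0int : x0 ∈ interior {x : ℝ × ℝ × ℝ | 0 ≤ x.1 ∧ x.1 ≤ ((w n).1 : ℝ) ∧
        N (x.1 • v - x.2) ≤ c} := interior_maximal hsub hUopen hx0U
    have hx0lat : x0 ∈ {x : ℝ × ℝ × ℝ | ∃ z : ℤ × ℤ × ℤ,
        x = ((z.1 : ℝ), (z.2.1 : ℝ), (z.2.2 : ℝ))} := by
      exact ⟨((q : ℤ), (p.1, p.2)), by push_cast; rfl⟩
    have := hempty n hn
    rw [hc] at hx0int
    have hmem : x0 ∈ (∅ : Set (ℝ × ℝ × ℝ)) := by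
      rw [← this]; exact ⟨hx0int, hx0lat⟩
    exact hmem
  -- basic facts about q_n
  have hq_mono : StrictMono fun n => (w n).1 := strictMono_nat_of_lt_succ hmono
  have hqpos : ∀ n : ℕ, 1 ≤ (w n).1 := by
    intro n
    have := hq_mono.monotone (Nat.zero_le n)
    simpa [h0] using this
  -- part 3 : the given lattice points realize the lattice distance
  have hpart3 : ∀ n : ℕ,
      N (((w n).1 : ℝ) • v - (((w n).2.1 : ℝ), ((w n).2.2 : ℝ))) =
        latDist N (((w n).1 : ℝ) • v) := by
    intro n
    obtain ⟨p0, hp0eq, hp0min⟩ := latDist_min hN (((w n).1 : ℝ) • v)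
    have hle : latDist N (((w n).1 : ℝ) • v) ≤
        N (((w n).1 : ℝ) • v - (((w n).2.1 : ℝ), ((w n).2.2 : ℝ))) := by
      rw [hp0eq]; exact hp0min (w n).2
    rcases lt_or_eq_of_le hle with hlt | heq
    · exfalso
      apply key (n + 1) (Nat.le_add_left 1 n) (w n).1 p0 (hqpos n) (hmono n)
      have hidx : (n + 1) - 1 = n := rfl
      rw [hidx, ← hp0eq]
      exact hlt
    · exact heq.symm
  refine ⟨h0, ?_, hpart3⟩
  intro n hn
  constructor
  · refine ⟨hqpos n, ?_⟩
    rw [← hpart3 n, ← hpart3 (n - 1)]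
    exact hdec n hn
  · rintro q ⟨hq1, hqlt⟩
    by_contra hcon
    push_neg at hcon
    obtain ⟨p0, hp0eq, hp0min⟩ := latDist_min hN ((q : ℝ) • v)
    apply key n hn q p0 hq1 hcon
    rw [← hp0eq, hpart3 (n - 1)]
    exact hqlt
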